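/- For Σ SPD with spectral decomposition Σ = PDP^T and θ ∈ ℝ nonzero, and symmetric V, the matrix Σ^{-θ/2} ∂_V pow_θ(Σ) Σ^{-θ/2} equals P(ε_θ ∘ P^T V P)P^T, where ε_θ(i,j) = (d_i d_j)^{-θ/2} (d_i^θ - d_j^θ)/(d_i - d_j) (interpreted as θ d_i^{-1} when d_i = d_j), and all entries ε_θ(i,j)/θ are strictly positive. -/

import Mathlib

open Matrix

lemma quot_pos (a b θ : ℝ) (ha : 0 < a) (hb : 0 < b) (hab : a ≠ b) (hθ : θ ≠ 0) :
    0 < (a ^ θ - b ^ θ) / (a - b) / θ := by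
  have key : ∀ x y : ℝ, 0 < x → 0 < y → x < y → 0 < (x ^ θ - y ^ θ) / (x - y) / θ := by
    intro x y hx hy hxy
    rcases hθ.lt_or_gt with hneg | hpos
    · have h1 : y ^ θ < x ^ θ := Real.rpow_lt_rpow_of_neg hx hxy hneg
      have : (x ^ θ - y ^ θ) / (x - y) < 0 :=
        div_neg_of_pos_of_neg (by linarith) (by linarith)
      exact div_pos_of_neg_of_neg this hneg
    · have h1 : x ^ θ < y ^ θ := Real.rpow_lt_rpow hx.le hxy hpos
      have : 0 < (x ^ θ - y ^ θ) / (x - y) :=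
        div_pos_of_neg_of_neg (by linarith) (by linarith)
      exact div_pos this hpos
  rcases hab.lt_or_gt with h | h
  · exact key a b ha hb h
  · have := key b a hb ha h
    have heq : (b ^ θ - a ^ θ) / (b - a) = (a ^ θ - b ^ θ) / (a - b) := by
      rw [div_eq_div_iff (by linarith) (sub_ne_zero.mpr hab)]; ring
    rwa [heq] at this

/-- For `S = P D Pᵀ` SPD and `θ ≠ 0`,
`S^{-θ/2} ∂_V pow_θ(S) S^{-θ/2} = P (ε_θ ∘ Pᵀ V P) Pᵀ` where
`ε_θ(i,j) = (d_i d_j)^{-θ/2} (d_i^θ - d_j^θ)/(d_i - d_j)` (interpreted as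
`θ d_i⁻¹` when `d_i = d_j`), and all entries `ε_θ(i,j)/θ` are strictly positive. -/
theorem power_affine_transport (n : ℕ) (S P V : Matrix (Fin n) (Fin n) ℝ)
    (d : Fin n → ℝ) (hd : ∀ i, 0 < d i) (hP : P * Pᵀ = 1)
    (hS : S = P * Matrix.diagonal d * Pᵀ) (hSpd : S.PosDef)
    (hV : V.IsSymm) (θ : ℝ) (hθ : θ ≠ 0) :
    let δ : Matrix (Fin n) (Fin n) ℝ := Matrix.of fun i j =>
      if d i = d j then θ * d i ^ (θ - 1) else (d i ^ θ - d j ^ θ) / (d i - d j)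
    let ε : Matrix (Fin n) (Fin n) ℝ := Matrix.of fun i j =>
      if d i = d j then θ * (d i)⁻¹
      else (d i * d j) ^ (-(θ / 2)) * ((d i ^ θ - d j ^ θ) / (d i - d j))
    let Spow : ℝ → Matrix (Fin n) (Fin n) ℝ := fun a =>
      P * Matrix.diagonal (fun i => d i ^ a) * Pᵀ
    Spow (-(θ / 2)) * (P * Matrix.hadamard δ (Pᵀ * V * P) * Pᵀ) * Spow (-(θ / 2))
        = P * Matrix.hadamard ε (Pᵀ * V * P) * Pᵀ ∧
    ∀ i j, 0 < ε i j / θ := by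
  intro δ ε Spow
  have hPt : Pᵀ * P = 1 := mul_eq_one_comm.mp hP
  have hcancel : ∀ X : Matrix (Fin n) (Fin n) ℝ, Pᵀ * (P * X) = X := fun X => by
    rw [← Matrix.mul_assoc, hPt, Matrix.one_mul]
  constructor
  · set e : Fin n → ℝ := fun i => d i ^ (-(θ / 2)) with he
    set M := Pᵀ * V * P with hM
    set D' := Matrix.diagonal e with hD'
    have hentry : D' * (Matrix.hadamard δ M * D') = Matrix.hadamard ε M := by
      ext i j
      simp only [hD', Matrix.diagonal_mul, Matrix.mul_diagonal, Matrix.hadamard_apply,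
        Matrix.of_apply, δ, ε]
      by_cases h : d i = d j
      · simp only [if_pos h]
        have : e i * (θ * d i ^ (θ - 1) * M i j * e j) = (θ * (d i)⁻¹) * M i j := by
          have hej : e j = d i ^ (-(θ / 2)) := by rw [he]; simp [← h]
          rw [hej, he]
          have : d i ^ (-(θ / 2)) * d i ^ (θ - 1) * d i ^ (-(θ / 2)) = (d i)⁻¹ := by
            rw [← Real.rpow_add (hd i), ← Real.rpow_add (hd i), ← Real.rpow_neg_one]
            ring_nf
          calc d i ^ (-(θ / 2)) * (θ * d i ^ (θ - 1) * M i j * d i ^ (-(θ / 2)))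
              = θ * (d i ^ (-(θ / 2)) * d i ^ (θ - 1) * d i ^ (-(θ / 2))) * M i j := by ring
            _ = θ * (d i)⁻¹ * M i j := by rw [this]
        exact this
      · simp only [if_neg h]
        have hmul : (d i * d j) ^ (-(θ / 2)) = e i * e j := by
          rw [he, Real.mul_rpow (hd i).le (hd j).le]
        rw [hmul]; ring
    calc Spow (-(θ / 2)) * (P * Matrix.hadamard δ M * Pᵀ) * Spow (-(θ / 2))
        = P * (D' * (Matrix.hadamard δ M * (D' * Pᵀ))) := by
          simp only [Spow, Matrix.mul_assoc, hcancel]; rfl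
      _ = P * (Matrix.hadamard ε M * Pᵀ) := by
          rw [← Matrix.mul_assoc (Matrix.hadamard δ M), ← Matrix.mul_assoc D' _ Pᵀ, hentry]
      _ = P * Matrix.hadamard ε M * Pᵀ := by rw [Matrix.mul_assoc]
  · intro i j
    simp only [ε, Matrix.of_apply]
    by_cases h : d i = d j
    · simp only [if_pos h]
      have heq : θ * (d i)⁻¹ / θ = (d i)⁻¹ := by
        rw [mul_comm, mul_div_assoc, div_self hθ, mul_one]
      rw [heq]
      exact inv_pos.mpr (hd i)
    · simp only [if_neg h]
      rw [mul_div_assoc]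
      exact mul_pos (Real.rpow_pos_of_pos (mul_pos (hd i) (hd j)) _)
        (quot_pos _ _ _ (hd i) (hd j) h hθ)
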